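/- A suffix item [β] is inserted in T_{j,k} (by the variant algorithm) if and only if some dotted item [A → α • β] is inserted in E_{i,j} (by the Earley algorithm) for some A, α, i, and moreover β ⇒* a_{j+1}⋯a_k. -/

import Mathlib

/-! Formalization of Earley parsing and the Nederhof–Satta variant. -/

variable {T N : Type}

/-- A context-free grammar: a start nonterminal and a set of productions. -/
structure CFG (T N : Type) where
  initial : N
  rules : Set (N × List (Symbol T N))

/-- One rewriting step of the grammar. -/
def CFG.Produces (g : CFG T N) (u v : List (Symbol T N)) : Prop :=
  ∃ A α p q, (A, α) ∈ g.rules ∧ u = p ++ [Symbol.nonterminal A] ++ q ∧ v = p ++ α ++ q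

/-- The derivation relation ⇒* (reflexive-transitive closure of rewriting). -/
def CFG.Derives (g : CFG T N) : List (Symbol T N) → List (Symbol T N) → Prop :=
  Relation.ReflTransGen g.Produces

/-- The language of the grammar: { w | S ⇒* w }. -/
def CFG.language (g : CFG T N) : Set (List T) :=
  { w | g.Derives [Symbol.nonterminal g.initial] (w.map Symbol.terminal) }

/-- `inputSlice w i j` is the substring a_{i+1}⋯a_j of `w` (0-based: w[i..j)), as symbols. -/
def inputSlice (w : List T) (i j : ℕ) : List (Symbol T N) :=
  ((w.take j).drop i).map Symbol.terminal

/-- The least Earley table: `Earley g w A α β i j` means the dotted item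
[A → α • β] is inserted in E_{i,j}. -/
inductive Earley (g : CFG T N) (w : List T) :
    N → List (Symbol T N) → List (Symbol T N) → ℕ → ℕ → Prop where
  | init {α} : (g.initial, α) ∈ g.rules → Earley g w g.initial [] α 0 0
  | predict {B α A β i j γ} : Earley g w B α (Symbol.nonterminal A :: β) i j →
      (A, γ) ∈ g.rules → Earley g w A [] γ j j
  | scan {A α a β i j} : Earley g w A α (Symbol.terminal a :: β) i j →
      w[j]? = some a → Earley g w A (α ++ [Symbol.terminal a]) β i (j + 1)
  | complete {A α B β i k γ j} : Earley g w A α (Symbol.nonterminal B :: β) i k →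
      Earley g w B γ [] k j → (B, γ) ∈ g.rules →
      Earley g w A (α ++ [Symbol.nonterminal B]) β i j

mutual
  /-- Forward part of the variant: `VarU g w β j` means suffix item [β] ∈ U_j. -/
  inductive VarU (g : CFG T N) (w : List T) : List (Symbol T N) → ℕ → Prop where
    | init {α} : (g.initial, α) ∈ g.rules → VarU g w α 0
    | predict {A β j γ} : VarU g w (Symbol.nonterminal A :: β) j →
        (A, γ) ∈ g.rules → VarU g w γ j
    | scan {a β j} : VarU g w (Symbol.terminal a :: β) j → w[j]? = some a →
        VarU g w β (j + 1)
    | complete {B β k γ j} : VarU g w (Symbol.nonterminal B :: β) k → (B, γ) ∈ g.rules →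
        VarT g w γ k j → VarU g w β j

  /-- Backward part of the variant: `VarT g w β j m` means suffix item [β] ∈ T_{j,m}. -/
  inductive VarT (g : CFG T N) (w : List T) : List (Symbol T N) → ℕ → ℕ → Prop where
    | empty {m} : VarU g w [] m → VarT g w [] m m
    | scan {a β j m} : VarU g w (Symbol.terminal a :: β) j → w[j]? = some a →
        VarT g w β (j + 1) m → VarT g w (Symbol.terminal a :: β) j m
    | complete {B β k γ j m} : VarU g w (Symbol.nonterminal B :: β) k → (B, γ) ∈ g.rules →
        VarT g w γ k j → VarT g w β j m → VarT g w (Symbol.nonterminal B :: β) k m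
end

/-! ### Auxiliary lemmas about `inputSlice` -/

lemma slice_self (w : List T) (j : ℕ) : inputSlice (N := N) w j j = [] := by
  simp [inputSlice, List.drop_eq_nil_of_le, List.length_take]

lemma slice_length (w : List T) {j k : ℕ} (hjk : j ≤ k) (hk : k ≤ w.length) :
    (inputSlice (N := N) w j k).length = k - j := by
  simp [inputSlice, List.length_drop, List.length_take]
  omega

lemma slice_append (w : List T) {j m k : ℕ} (h1 : j ≤ m) (h2 : m ≤ k) (_h3 : k ≤ w.length) :
    inputSlice (N := N) w j m ++ inputSlice w m k = inputSlice w j k := by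
  unfold inputSlice
  rw [← List.map_append]
  congr 1
  have : w.take m = (w.take k).take m := by rw [List.take_take, min_eq_left h2]
  rw [this, List.drop_take]
  calc ((w.take k).drop j).take (m - j) ++ (w.take k).drop m
      = ((w.take k).drop j).take (m - j) ++ (((w.take k).drop j)).drop (m - j) := by
        rw [List.drop_drop]; congr 2; omega
    _ = (w.take k).drop j := List.take_append_drop _ _

lemma slice_cons (w : List T) {j k : ℕ} {a : T} (hjk : j < k) (hk : k ≤ w.length)
    (ha : w[j]? = some a) :
    inputSlice (N := N) w j k = Symbol.terminal a :: inputSlice w (j + 1) k := by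
  unfold inputSlice
  have hj : j < (w.take k).length := by simp [List.length_take]; omega
  rw [List.drop_eq_getElem_cons hj]
  simp only [List.map_cons]
  congr 1
  have h2 : (w.take k)[j] = w[j]'(by omega) := List.getElem_take (xs := w)
  rw [List.getElem?_eq_getElem (by omega)] at ha
  simp only [Option.some_inj] at ha
  rw [h2, ha]

/-- A split of a slice into two parts corresponds to a splitting index. -/
lemma slice_split (w : List T) {j k : ℕ} {t1 t2 : List (Symbol T N)}
    (hjk : j ≤ k) (hk : k ≤ w.length) (h : inputSlice w j k = t1 ++ t2) :
    ∃ m, j ≤ m ∧ m ≤ k ∧ t1 = inputSlice w j m ∧ t2 = inputSlice w m k := by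
  have hlen : k - j = t1.length + t2.length := by
    rw [← slice_length (N := N) w hjk hk, h, List.length_append]
  refine ⟨j + t1.length, by omega, by omega, ?_⟩
  have hsa : inputSlice (N := N) w j (j + t1.length) ++ inputSlice w (j + t1.length) k
      = t1 ++ t2 := by
    rw [slice_append w (by omega) (by omega) hk, h]
  have hl1 : (inputSlice (N := N) w j (j + t1.length)).length = t1.length := by
    rw [slice_length w (by omega) (by omega)]; omega
  obtain ⟨e1, e2⟩ := List.append_inj hsa hl1
  exact ⟨e1.symm, e2.symm⟩

/-! ### Derivation lemmas -/

lemma produces_append {g : CFG T N} {u v : List (Symbol T N)} (h : g.Produces u v)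
    (p q : List (Symbol T N)) : g.Produces (p ++ u ++ q) (p ++ v ++ q) := by
  obtain ⟨A, α, p', q', hr, hu, hv⟩ := h
  exact ⟨A, α, p ++ p', q' ++ q, hr, by simp [hu], by simp [hv]⟩

lemma derives_append {g : CFG T N} {u v u' v' : List (Symbol T N)}
    (h1 : g.Derives u u') (h2 : g.Derives v v') : g.Derives (u ++ v) (u' ++ v') := by
  have s1 : g.Derives (u ++ v) (u' ++ v) :=
    Relation.ReflTransGen.lift (fun x => x ++ v) (fun a b hab => by
      simpa [Function.onFun] using produces_append hab [] v) _ _ h1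
  have s2 : g.Derives (u' ++ v) (u' ++ v') :=
    Relation.ReflTransGen.lift (fun x => u' ++ x) (fun a b hab => by
      simpa [Function.onFun] using produces_append hab u' []) _ _ h2
  exact s1.trans s2

/-- Step-counted derivations. -/
inductive DerivesIn (g : CFG T N) : ℕ → List (Symbol T N) → List (Symbol T N) → Prop
  | refl (u) : DerivesIn g 0 u u
  | head {n u v w} : g.Produces u v → DerivesIn g n v w → DerivesIn g (n + 1) u w

lemma derivesIn_iff {g : CFG T N} {u v : List (Symbol T N)} :
    g.Derives u v ↔ ∃ n, DerivesIn g n u v := by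
  constructor
  · intro h
    induction h using Relation.ReflTransGen.head_induction_on with
    | refl => exact ⟨0, .refl _⟩
    | head hp _ ih => obtain ⟨n, hn⟩ := ih; exact ⟨n + 1, .head hp hn⟩
  · rintro ⟨n, hn⟩
    induction hn with
    | refl => exact Relation.ReflTransGen.refl
    | head hp _ ih => exact Relation.ReflTransGen.head hp ih

lemma produces_nil {g : CFG T N} {v : List (Symbol T N)} : ¬ g.Produces [] v := by
  rintro ⟨A, α, p, q, _, h, _⟩
  simp at h

lemma produces_single_terminal {g : CFG T N} {a : T} {v : List (Symbol T N)} :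
    ¬ g.Produces [Symbol.terminal a] v := by
  rintro ⟨A, α, p, q, _, h, _⟩
  rcases p with _ | ⟨x, _ | ⟨y, p⟩⟩ <;> simp_all

lemma derivesIn_nil {g : CFG T N} {n : ℕ} {v : List (Symbol T N)}
    (h : DerivesIn g n [] v) : v = [] ∧ n = 0 := by
  cases h with
  | refl => exact ⟨rfl, rfl⟩
  | head hp _ => exact absurd hp produces_nil

lemma derivesIn_single_terminal {g : CFG T N} {n : ℕ} {a : T} {v : List (Symbol T N)}
    (h : DerivesIn g n [Symbol.terminal a] v) : v = [Symbol.terminal a] ∧ n = 0 := by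
  cases h with
  | refl => exact ⟨rfl, rfl⟩
  | head hp _ => exact absurd hp produces_single_terminal

lemma derivesIn_single_nonterminal {g : CFG T N} {n : ℕ} {B : N} {v : List (Symbol T N)}
    (h : DerivesIn g n [Symbol.nonterminal B] v) (hv : v ≠ [Symbol.nonterminal B]) :
    ∃ γ m, (B, γ) ∈ g.rules ∧ m + 1 = n ∧ DerivesIn g m γ v := by
  cases h with
  | refl => exact absurd rfl hv
  | head hp hrest =>
    obtain ⟨A, α, p, q, hr, hu, hv'⟩ := hp
    rcases p with _ | ⟨x, p⟩
    · simp only [List.nil_append, List.singleton_append, List.cons.injEq,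
        Symbol.nonterminal.injEq] at hu
      obtain ⟨hA, hq⟩ := hu
      subst hA
      subst hq
      simp only [List.nil_append, List.append_nil] at hv'
      subst hv'
      exact ⟨_, _, hr, rfl, hrest⟩
    · exfalso
      simp only [List.cons_append, List.cons.injEq] at hu
      have := hu.2
      simp [List.append_eq_nil_iff] at this

/-- Splitting lemma: a derivation from a concatenation splits into two derivations. -/
lemma derivesIn_append_split {g : CFG T N} {n : ℕ} {u v ts : List (Symbol T N)}
    (h : DerivesIn g n (u ++ v) ts) :
    ∃ t1 t2 n1 n2, ts = t1 ++ t2 ∧ n1 + n2 = n ∧ DerivesIn g n1 u t1 ∧ DerivesIn g n2 v t2 := by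
  induction n generalizing u v with
  | zero =>
    cases h
    exact ⟨u, v, 0, 0, rfl, rfl, .refl _, .refl _⟩
  | succ n ih =>
    cases h with
    | head hp hrest =>
      obtain ⟨A, α, p, q, hr, hu, hx⟩ := hp
      subst hx
      rw [List.append_assoc] at hu
      rcases List.append_eq_append_iff.mp hu with ⟨a', hp', hv'⟩ | ⟨c', hu', hq'⟩
      · subst hp' hv'
        rw [show u ++ a' ++ α ++ q = u ++ (a' ++ α ++ q) by simp] at hrest
        obtain ⟨t1, t2, n1, n2, hts, hn, h1, h2⟩ := ih hrest
        exact ⟨t1, t2, n1, n2 + 1, hts, by omega, h1,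
          .head ⟨A, α, a', q, hr, by simp, by simp⟩ h2⟩
      · rcases c' with _ | ⟨x, c'⟩
        · simp only [List.append_nil] at hu'
          subst hu'
          simp only [List.nil_append] at hq'
          subst hq'
          rw [show u ++ α ++ q = u ++ (α ++ q) by simp] at hrest
          obtain ⟨t1, t2, n1, n2, hts, hn, h1, h2⟩ := ih hrest
          exact ⟨t1, t2, n1, n2 + 1, hts, by omega, h1,
            .head ⟨A, α, [], q, hr, by simp, by simp⟩ h2⟩
        · simp only [List.singleton_append, List.cons_append, List.cons.injEq] at hq'
          obtain ⟨hx, hq⟩ := hq'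
          subst hx
          subst hu'
          subst hq
          rw [show p ++ α ++ (c' ++ v) = (p ++ α ++ c') ++ v by simp] at hrest
          obtain ⟨t1, t2, n1, n2, hts, hn, h1, h2⟩ := ih hrest
          exact ⟨t1, t2, n1 + 1, n2, hts, by omega,
            .head ⟨A, α, p, c', hr, by simp, by simp⟩ h1, h2⟩

/-! ### Lemmas about the Earley table -/

lemma get?_lt {w : List T} {j : ℕ} {a : T} (h : w[j]? = some a) : j < w.length :=
  (List.getElem?_eq_some_iff.mp h).choose

lemma earley_bounds {g : CFG T N} {w : List T} {A α β i j}
    (h : Earley g w A α β i j) : i ≤ j ∧ j ≤ w.length := by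
  induction h with
  | init _ => exact ⟨le_refl 0, Nat.zero_le _⟩
  | predict _ _ ih => exact ⟨le_refl _, ih.2⟩
  | scan _ ha ih =>
    have := get?_lt ha
    exact ⟨by omega, by omega⟩
  | complete _ _ _ ih1 ih2 => exact ⟨le_trans ih1.1 ih2.1, ih2.2⟩

/-- Soundness of the Earley table: the part before the dot derives the input span. -/
lemma earley_sound {g : CFG T N} {w : List T} {A α β i j}
    (h : Earley g w A α β i j) : g.Derives α (inputSlice w i j) := by
  induction h with
  | init _ => rw [slice_self]; exact Relation.ReflTransGen.refl
  | predict _ _ _ => rw [slice_self]; exact Relation.ReflTransGen.refl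
  | scan h1 ha ih =>
    have hb := earley_bounds h1
    have hjw := get?_lt ha
    rw [← slice_append w hb.1 (Nat.le_succ _) (by omega)]
    refine derives_append ih ?_
    rw [slice_cons w (Nat.lt_succ_self _) (by omega) ha, slice_self]
    exact Relation.ReflTransGen.refl
  | complete h1 h2 hr ih1 ih2 =>
    rename_i γ' j'
    have hb1 := earley_bounds h1
    have hb2 := earley_bounds h2
    rw [← slice_append w hb1.1 hb2.1 hb2.2]
    refine derives_append ih1 ?_
    exact Relation.ReflTransGen.head (b := γ') ⟨_, _, [], [], hr, by simp, by simp⟩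
      (by simpa [CFG.Derives] using ih2)

/-- Dot-advancement: if the suffix derives the input span j..k, the dot can move to the end. -/
lemma earley_advance {g : CFG T N} {w : List T} :
    ∀ n : ℕ, ∀ (β : List (Symbol T N)) (j k : ℕ), j ≤ k → k ≤ w.length →
      DerivesIn g n β (inputSlice w j k) →
      ∀ {A α i}, Earley g w A α β i j → Earley g w A (α ++ β) [] i k := by
  intro n
  induction n using Nat.strong_induction_on with
  | _ n IHn =>
    intro β
    induction β with
    | nil =>
      intro j k hjk hk hd A α i he
      obtain ⟨hts, -⟩ := derivesIn_nil hd
      have : k - j = 0 := by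
        rw [← slice_length (N := N) w hjk hk, hts]
        rfl
      have hkj : k = j := by omega
      subst hkj
      simpa using he
    | cons x β' IHβ =>
      intro j k hjk hk hd A α i he
      obtain ⟨t1, t2, n1, n2, hts, hn, h1, h2⟩ :=
        derivesIn_append_split (u := [x]) (v := β') (by simpa using hd)
      cases x with
      | terminal a =>
        obtain ⟨ht1, hn1⟩ := derivesIn_single_terminal h1
        subst ht1; subst hn1
        have hlen : k - j = 1 + t2.length := by
          rw [← slice_length (N := N) w hjk hk, hts]
          simp only [List.singleton_append, List.length_cons]
          omega
        have hjk' : j < k := by omega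
        obtain ⟨a', ha'⟩ : ∃ a', w[j]? = some a' := by
          exact ⟨_, List.getElem?_eq_getElem (by omega)⟩
        rw [slice_cons w hjk' hk ha'] at hts
        simp only [List.singleton_append, List.cons.injEq, Symbol.terminal.injEq] at hts
        obtain ⟨haa, ht2⟩ := hts
        subst haa
        have he' := Earley.scan he ha'
        have hn2 : n2 = n := by omega
        subst hn2
        have := IHβ (j + 1) k (by omega) hk (ht2 ▸ h2) he'
        simpa using this
      | nonterminal B =>
        have ht1ne : t1 ≠ [Symbol.nonterminal B] := by
          intro hcon
          have hmem : Symbol.nonterminal B ∈ inputSlice (N := N) w j k := by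
            rw [hts, hcon]; simp
          simp only [inputSlice, List.mem_map] at hmem
          obtain ⟨s, -, hs⟩ := hmem
          simp at hs
        obtain ⟨γ, m1, hr, hm1, hd1⟩ := derivesIn_single_nonterminal h1 ht1ne
        obtain ⟨m, hjm, hmk, he1, he2⟩ := slice_split w hjk hk hts
        have hpred : Earley g w B [] γ j j := .predict he hr
        have hγ : Earley g w B γ [] j m := by
          have := IHn m1 (by omega) γ j m hjm (by omega) (he1 ▸ hd1) hpred
          simpa using this
        have hcomp : Earley g w A (α ++ [Symbol.nonterminal B]) β' i m :=
          .complete he hγ hr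
        have := IHn n2 (by omega) β' m k hmk hk (he2 ▸ h2) hcomp
        simpa using this

/-! ### Lemmas about the variant tables -/

section VarMain

variable {g : CFG T N} {w : List T}

private lemma vm_init : ∀ {α : List (Symbol T N)}, (g.initial, α) ∈ g.rules →
    (0 : ℕ) ≤ w.length ∧ ∃ A α' i, Earley g w A α' α i 0 :=
  fun hr => ⟨Nat.zero_le _, _, _, _, .init hr⟩

private lemma vm_predict : ∀ {A : N} {β : List (Symbol T N)} {j : ℕ} {γ : List (Symbol T N)},
    VarU g w (Symbol.nonterminal A :: β) j → (A, γ) ∈ g.rules →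
    (j ≤ w.length ∧ ∃ A' α i, Earley g w A' α (Symbol.nonterminal A :: β) i j) →
    (j ≤ w.length ∧ ∃ A' α i, Earley g w A' α γ i j) := by
  intro A β j γ _ hr ih
  obtain ⟨hjw, A', α', i', hE⟩ := ih
  exact ⟨hjw, _, _, _, .predict hE hr⟩

private lemma vm_scan : ∀ {a : T} {β : List (Symbol T N)} {j : ℕ},
    VarU g w (Symbol.terminal a :: β) j → w[j]? = some a →
    (j ≤ w.length ∧ ∃ A α i, Earley g w A α (Symbol.terminal a :: β) i j) →
    (j + 1 ≤ w.length ∧ ∃ A α i, Earley g w A α β i (j + 1)) := by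
  intro a β j _ ha ih
  obtain ⟨hjw, A, α, i, hE⟩ := ih
  have := get?_lt ha
  exact ⟨by omega, _, _, _, .scan hE ha⟩

private lemma vm_complete : ∀ {B : N} {β : List (Symbol T N)} {k : ℕ}
    {γ : List (Symbol T N)} {j : ℕ},
    VarU g w (Symbol.nonterminal B :: β) k → (B, γ) ∈ g.rules → VarT g w γ k j →
    (k ≤ w.length ∧ ∃ A α i, Earley g w A α (Symbol.nonterminal B :: β) i k) →
    (k ≤ j ∧ j ≤ w.length ∧ g.Derives γ (inputSlice w k j)) →
    (j ≤ w.length ∧ ∃ A α i, Earley g w A α β i j) := by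
  intro B β k γ j _ hr _ ihU ihT
  obtain ⟨hkw, A, α, i, hE⟩ := ihU
  obtain ⟨hkj, hjw, hdγ⟩ := ihT
  obtain ⟨n, hn⟩ := derivesIn_iff.mp hdγ
  have hpred : Earley g w B [] γ k k := .predict hE hr
  have hadv : Earley g w B γ [] k j := by
    simpa using earley_advance n γ k j hkj hjw hn hpred
  exact ⟨hjw, _, _, _, .complete hE hadv hr⟩

private lemma vm_tempty : ∀ {m : ℕ}, VarU g w ([] : List (Symbol T N)) m →
    (m ≤ w.length ∧ ∃ A α i, Earley g w A α ([] : List (Symbol T N)) i m) →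
    (m ≤ m ∧ m ≤ w.length ∧ g.Derives ([] : List (Symbol T N)) (inputSlice w m m)) := by
  intro m _ ih
  exact ⟨le_refl m, ih.1, by rw [slice_self]; exact Relation.ReflTransGen.refl⟩

private lemma vm_tscan : ∀ {a : T} {β : List (Symbol T N)} {j m : ℕ},
    VarU g w (Symbol.terminal a :: β) j → w[j]? = some a → VarT g w β (j + 1) m →
    (j ≤ w.length ∧ ∃ A α i, Earley g w A α (Symbol.terminal a :: β) i j) →
    (j + 1 ≤ m ∧ m ≤ w.length ∧ g.Derives β (inputSlice w (j + 1) m)) →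
    (j ≤ m ∧ m ≤ w.length ∧ g.Derives (Symbol.terminal a :: β) (inputSlice w j m)) := by
  intro a β j m _ ha _ _ ihT
  obtain ⟨hjm, hmw, hd⟩ := ihT
  refine ⟨by omega, hmw, ?_⟩
  rw [slice_cons w (by omega) hmw ha]
  have := derives_append (u := [Symbol.terminal a]) (u' := [Symbol.terminal a])
    Relation.ReflTransGen.refl hd
  simpa using this

private lemma vm_tcomplete : ∀ {B : N} {β : List (Symbol T N)} {k : ℕ}
    {γ : List (Symbol T N)} {j m : ℕ},
    VarU g w (Symbol.nonterminal B :: β) k → (B, γ) ∈ g.rules → VarT g w γ k j →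
    VarT g w β j m →
    (k ≤ w.length ∧ ∃ A α i, Earley g w A α (Symbol.nonterminal B :: β) i k) →
    (k ≤ j ∧ j ≤ w.length ∧ g.Derives γ (inputSlice w k j)) →
    (j ≤ m ∧ m ≤ w.length ∧ g.Derives β (inputSlice w j m)) →
    (k ≤ m ∧ m ≤ w.length ∧ g.Derives (Symbol.nonterminal B :: β) (inputSlice w k m)) := by
  intro B β k γ j m _ hr _ _ _ ihγ ihβ
  obtain ⟨hkj, hjw, hdγ⟩ := ihγ
  obtain ⟨hjm, hmw, hdβ⟩ := ihβ
  refine ⟨by omega, hmw, ?_⟩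
  rw [← slice_append w hkj hjm hmw]
  exact Relation.ReflTransGen.head ⟨B, γ, [], β, hr, by simp, by simp⟩
    (derives_append hdγ hdβ)

/-- Main forward lemma for `VarU`, by mutual induction on `VarU`/`VarT`. -/
lemma var_main_U {β : List (Symbol T N)} {j : ℕ} (h : VarU g w β j) :
    j ≤ w.length ∧ ∃ A α i, Earley g w A α β i j :=
  VarU.rec (motive_1 := fun β j _ => j ≤ w.length ∧ ∃ A α i, Earley g w A α β i j)
    (motive_2 := fun β j m _ => j ≤ m ∧ m ≤ w.length ∧ g.Derives β (inputSlice w j m))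
    (fun hr => vm_init hr)
    (fun hU hr ih => vm_predict hU hr ih)
    (fun hU ha ih => vm_scan hU ha ih)
    (fun hU hr hT ihU ihT => vm_complete hU hr hT ihU ihT)
    (fun hU ih => vm_tempty hU ih)
    (fun hU ha hT ihU ihT => vm_tscan hU ha hT ihU ihT)
    (fun hU hr hTγ hTβ ihU ihγ ihβ => vm_tcomplete hU hr hTγ hTβ ihU ihγ ihβ)
    h

/-- Main forward lemma for `VarT`, by mutual induction on `VarU`/`VarT`. -/
lemma var_main_T {β : List (Symbol T N)} {j m : ℕ} (h : VarT g w β j m) :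
    j ≤ m ∧ m ≤ w.length ∧ g.Derives β (inputSlice w j m) :=
  VarT.rec (motive_1 := fun β j _ => j ≤ w.length ∧ ∃ A α i, Earley g w A α β i j)
    (motive_2 := fun β j m _ => j ≤ m ∧ m ≤ w.length ∧ g.Derives β (inputSlice w j m))
    (fun hr => vm_init hr)
    (fun hU hr ih => vm_predict hU hr ih)
    (fun hU ha ih => vm_scan hU ha ih)
    (fun hU hr hT ihU ihT => vm_complete hU hr hT ihU ihT)
    (fun hU ih => vm_tempty hU ih)
    (fun hU ha hT ihU ihT => vm_tscan hU ha hT ihU ihT)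
    (fun hU hr hTγ hTβ ihU ihγ ihβ => vm_tcomplete hU hr hTγ hTβ ihU ihγ ihβ)
    h

end VarMain

/-- Backward lemma: a suffix in `U_j` whose suffix derives the input span j..k is in `T_{j,k}`. -/
lemma varT_of_derives {g : CFG T N} {w : List T} :
    ∀ n : ℕ, ∀ (β : List (Symbol T N)) (j k : ℕ), j ≤ k → k ≤ w.length →
      DerivesIn g n β (inputSlice w j k) → VarU g w β j → VarT g w β j k := by
  intro n
  induction n using Nat.strong_induction_on with
  | _ n IHn =>
    intro β
    induction β with
    | nil =>
      intro j k hjk hk hd hU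
      obtain ⟨hts, -⟩ := derivesIn_nil hd
      have : k - j = 0 := by
        rw [← slice_length (N := N) w hjk hk, hts]
        rfl
      have hkj : k = j := by omega
      subst hkj
      exact .empty hU
    | cons x β' IHβ =>
      intro j k hjk hk hd hU
      obtain ⟨t1, t2, n1, n2, hts, hn, h1, h2⟩ :=
        derivesIn_append_split (u := [x]) (v := β') (by simpa using hd)
      cases x with
      | terminal a =>
        obtain ⟨ht1, hn1⟩ := derivesIn_single_terminal h1
        subst ht1; subst hn1
        have hlen : k - j = 1 + t2.length := by
          rw [← slice_length (N := N) w hjk hk, hts]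
          simp only [List.singleton_append, List.length_cons]
          omega
        have hjk' : j < k := by omega
        obtain ⟨a', ha'⟩ : ∃ a', w[j]? = some a' := by
          exact ⟨_, List.getElem?_eq_getElem (by omega)⟩
        rw [slice_cons w hjk' hk ha'] at hts
        simp only [List.singleton_append, List.cons.injEq, Symbol.terminal.injEq] at hts
        obtain ⟨haa, ht2⟩ := hts
        subst haa
        have hU' := VarU.scan hU ha'
        have hn2 : n2 = n := by omega
        subst hn2
        exact .scan hU ha' (IHβ (j + 1) k (by omega) hk (ht2 ▸ h2) hU')
      | nonterminal B =>
        have ht1ne : t1 ≠ [Symbol.nonterminal B] := by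
          intro hcon
          have hmem : Symbol.nonterminal B ∈ inputSlice (N := N) w j k := by
            rw [hts, hcon]; simp
          simp only [inputSlice, List.mem_map] at hmem
          obtain ⟨s, -, hs⟩ := hmem
          simp at hs
        obtain ⟨γ, m1, hr, hm1, hd1⟩ := derivesIn_single_nonterminal h1 ht1ne
        obtain ⟨m, hjm, hmk, he1, he2⟩ := slice_split w hjk hk hts
        have hUγ : VarU g w γ j := .predict hU hr
        have hTγ : VarT g w γ j m := IHn m1 (by omega) γ j m hjm (by omega) (he1 ▸ hd1) hUγ
        have hUβ' : VarU g w β' m := .complete hU hr hTγ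
        have hTβ' : VarT g w β' m k := IHn n2 (by omega) β' m k hmk hk (he2 ▸ h2) hUβ'
        exact .complete hU hr hTγ hTβ'

/-- From an Earley item, the suffix is in `U_j`. -/
lemma earley_to_varU {g : CFG T N} {w : List T} {A α β i j}
    (h : Earley g w A α β i j) : VarU g w β j := by
  induction h with
  | init hr => exact .init hr
  | predict _ hr ih => exact .predict ih hr
  | scan _ ha ih => exact .scan ih ha
  | complete h1 h2 hr ih1 ih2 =>
    have hUγ : VarU g w _ _ := .predict ih1 hr
    have hγd := earley_sound h2
    obtain ⟨n, hn⟩ := derivesIn_iff.mp hγd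
    obtain ⟨hkj, hjw⟩ := earley_bounds h2
    exact .complete ih1 hr (varT_of_derives n _ _ _ hkj hjw hn hUγ)

/-- [β] ∈ T_{j,k} iff [A → α • β] ∈ E_{i,j} for some A, α, i,
and moreover β ⇒* a_{j+1}⋯a_k. -/
theorem variant_T_iff_earley (g : CFG T N) (w : List T)
    (β : List (Symbol T N)) (j k : ℕ) (hjk : j ≤ k) (hk : k ≤ w.length) :
    VarT g w β j k ↔
      (∃ A α i, Earley g w A α β i j) ∧ g.Derives β (inputSlice w j k) := by
  constructor
  · intro h
    have hU : VarU g w β j := by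
      cases h with
      | empty hu => exact hu
      | scan hu _ _ => exact hu
      | complete hu _ _ _ => exact hu
    exact ⟨(var_main_U hU).2, (var_main_T h).2.2⟩
  · rintro ⟨⟨A, α, i, hE⟩, hd⟩
    obtain ⟨n, hn⟩ := derivesIn_iff.mp hd
    exact varT_of_derives n β j k hjk hk hn (earley_to_varU hE)
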